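/- For every integer i ≥ 0, δ_i < δ_{i+1}; that is, the sequence (δ_i)_{i≥0} is strictly increasing (note δ_0 = 0). -/
import Mathlib

/-- The `n`-th harmonic number `H_n = ∑_{j=1}^n 1/j` (with `H 0 = 0`). -/
noncomputable def H (n : ℕ) : ℝ := ∑ j ∈ Finset.Icc 1 n, (1 : ℝ) / (j : ℝ)

/-- `δ_i = (1/2^i)·H_i + (1 − 1/2^i)·∑_{q=1}^∞ H_{q+i}/2^q`. -/
noncomputable def δ (i : ℕ) : ℝ :=
  (1 / 2 ^ i) * H i + (1 - 1 / 2 ^ i) * ∑' q : ℕ, H (q + 1 + i) / 2 ^ (q + 1)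

lemma H_nonneg (n : ℕ) : 0 ≤ H n := by
  unfold H; positivity

lemma H_mono : Monotone H := by
  intro m n h
  exact Finset.sum_le_sum_of_subset_of_nonneg (Finset.Icc_subset_Icc_right h)
    (fun j _ _ => by positivity)

lemma H_succ (n : ℕ) : H (n + 1) = H n + 1 / (n + 1) := by
  unfold H
  rw [Finset.sum_Icc_succ_top (by omega : 1 ≤ n + 1)]
  push_cast; ring

lemma H_le (n : ℕ) : H n ≤ n := by
  unfold H
  calc ∑ j ∈ Finset.Icc 1 n, (1 : ℝ) / j ≤ ∑ j ∈ Finset.Icc 1 n, (1 : ℝ) := by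
        refine Finset.sum_le_sum fun j hj => ?_
        rw [Finset.mem_Icc] at hj
        have : (1 : ℝ) ≤ j := by exact_mod_cast hj.1
        rw [div_le_one (by linarith)]; linarith
    _ = n := by simp

lemma sumS (i : ℕ) : Summable (fun q : ℕ => H (q + 1 + i) / 2 ^ (q + 1)) := by
  have hg : Summable (fun n : ℕ => ((n : ℝ) + i) * (1 / 2) ^ n) := by
    have h1 : Summable (fun n : ℕ => (n : ℝ) * (1 / 2) ^ n) := by
      simpa using summable_pow_mul_geometric_of_norm_lt_one 1
        (r := (1 / 2 : ℝ)) (by norm_num)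
    have h2 : Summable (fun n : ℕ => (i : ℝ) * (1 / 2) ^ n) :=
      (summable_geometric_of_lt_one (by norm_num) (by norm_num)).mul_left _
    simpa [add_mul] using h1.add h2
  have hg' : Summable (fun q : ℕ => ((q : ℝ) + 1 + i) * (1 / 2) ^ (q + 1)) := by
    have := (summable_nat_add_iff 1).2 hg
    refine this.congr fun q => ?_
    push_cast; ring
  refine Summable.of_nonneg_of_le (fun q => div_nonneg (H_nonneg _) (by positivity)) (fun q => ?_) hg'
  have h1 : H (q + 1 + i) ≤ ((q : ℝ) + 1 + i) := by
    have := H_le (q + 1 + i); push_cast at this ⊢; linarith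
  have h2 : (0:ℝ) < 2 ^ (q+1) := by positivity
  rw [div_le_iff₀ h2]
  calc H (q + 1 + i) ≤ ((q : ℝ) + 1 + i) := h1
    _ = ((q : ℝ) + 1 + i) * (1 / 2) ^ (q + 1) * 2 ^ (q + 1) := by
        rw [div_pow, one_pow]
        field_simp

lemma sumT (i : ℕ) : Summable (fun q : ℕ => (1 : ℝ) / ((q : ℝ) + 2 + i) / 2 ^ (q + 1)) := by
  have hg : Summable (fun q : ℕ => ((1:ℝ)/2) ^ (q + 1)) :=
    (summable_nat_add_iff 1).2 (summable_geometric_of_lt_one (by norm_num) (by norm_num))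
  refine Summable.of_nonneg_of_le (fun q => by positivity) (fun q => ?_) hg
  have h2 : (0:ℝ) < (q : ℝ) + 2 + i := by positivity
  rw [div_pow, one_pow]
  gcongr
  rw [div_le_one h2]
  linarith

/-- For every integer `i ≥ 0`, `δ_i < δ_{i+1}`: the sequence `(δ_i)` is strictly
increasing (note `δ 0 = 0`). -/
theorem stmt_16 (i : ℕ) : δ i < δ (i + 1) := by
  set Si := ∑' q : ℕ, H (q + 1 + i) / 2 ^ (q + 1) with hSi
  set Ti := ∑' q : ℕ, (1 : ℝ) / ((q : ℝ) + 2 + i) / 2 ^ (q + 1) with hTi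
  have hstep : (∑' q : ℕ, H (q + 1 + (i + 1)) / 2 ^ (q + 1)) = Si + Ti := by
    rw [hSi, hTi, ← Summable.tsum_add (sumS i) (sumT i)]
    refine tsum_congr fun q => ?_
    have h : q + 1 + (i + 1) = (q + 1 + i) + 1 := by omega
    rw [h, H_succ]
    push_cast
    ring
  have hT0 : 0 ≤ Ti := tsum_nonneg fun q => by positivity
  have hSge : H (i + 1) ≤ Si := by
    have hgs : Summable (fun q : ℕ => H (i + 1) * ((1 : ℝ) / 2) ^ (q + 1)) :=
      (((summable_nat_add_iff 1).2
        (summable_geometric_of_lt_one (by norm_num) (by norm_num)))).mul_left _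
    have hgeo : (∑' q : ℕ, H (i + 1) * ((1 : ℝ) / 2) ^ (q + 1)) = H (i + 1) := by
      rw [tsum_mul_left]
      have h1 : (∑' q : ℕ, ((1 : ℝ) / 2) ^ (q + 1))
          = (∑' q : ℕ, (1 / 2 : ℝ) * (1 / 2) ^ q) := by
        refine tsum_congr fun q => ?_
        rw [pow_succ]; ring
      rw [h1, tsum_mul_left, tsum_geometric_of_lt_one (by norm_num) (by norm_num)]
      norm_num
    rw [← hgeo, hSi]
    refine Summable.tsum_le_tsum (fun q => ?_) hgs (sumS i)
    have hm : H (i + 1) ≤ H (q + 1 + i) := H_mono (by omega)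
    have : H (i + 1) * ((1 : ℝ) / 2) ^ (q + 1) = H (i + 1) / 2 ^ (q + 1) := by
      rw [div_pow, one_pow]; ring
    rw [this]
    gcongr
  have hδi : δ i = (1 / 2 ^ i) * H i + (1 - 1 / 2 ^ i) * Si := rfl
  have hδi1 : δ (i + 1) = (1 / 2 ^ (i + 1)) * H (i + 1) + (1 - 1 / 2 ^ (i + 1)) * (Si + Ti) := by
    rw [δ, hstep]
  have h2i : (1 : ℝ) / 2 ^ i = 2 * (1 / 2 ^ (i + 1)) := by
    rw [pow_succ]; ring
  have ha : (0 : ℝ) < 1 / 2 ^ (i + 1) := by positivity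
  have ha1 : (1 : ℝ) / 2 ^ (i + 1) ≤ 1 := by
    rw [div_le_one (by positivity)]
    calc (1 : ℝ) = 1 ^ (i + 1) := by simp
      _ ≤ 2 ^ (i + 1) := by gcongr; norm_num
  have hHs := H_succ i
  have hc : (0 : ℝ) < 1 / ((i : ℝ) + 1) := by positivity
  rw [hδi, hδi1, h2i]
  nlinarith [mul_nonneg ha.le (sub_nonneg.2 hSge), mul_nonneg (sub_nonneg.2 ha1) hT0,
    mul_pos ha hc]
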